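/- Local constancy of the zero count for families without double zeros: Let ℓ > 0, let U be an open subset of ℝ^m, and let f : U × ℝ → ℝ be continuously differentiable with f(ω, θ+ℓ) = f(ω, θ) for all ω ∈ U and θ ∈ ℝ. Assume that for every ω ∈ U there is no θ ∈ ℝ with f(ω,θ) = 0 and ∂_θ f(ω,θ) = 0. Then for every ω ∈ U the set {θ ∈ [0,ℓ) : f(ω,θ) = 0} is finite, and the function ω ↦ #{θ ∈ [0,ℓ) : f(ω,θ) = 0} is locally constant on U. -/

import Mathlib

open Set Metric Filter

section Aux

variable {E : Type*} [NormedAddCommGroup E] [NormedSpace ℝ E]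


lemma keyPos {E : Type*} [NormedAddCommGroup E] [NormedSpace ℝ E]
    (U : Set E) (hU : IsOpen U) (f φ : E × ℝ → ℝ)
    (hfc : ContinuousOn f (U ×ˢ (Set.univ : Set ℝ)))
    (hφc : ContinuousOn φ (U ×ˢ (Set.univ : Set ℝ)))
    (hder : ∀ ω' ∈ U, ∀ t : ℝ, HasDerivAt (fun s => f (ω', s)) (φ (ω', t)) t)
    {ω : E} (hω : ω ∈ U) {c : ℝ} (hc : f (ω, c) = 0) (hφ : 0 < φ (ω, c))
    {r0 : ℝ} (hr0 : 0 < r0) :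
    ∃ r, 0 < r ∧ r ≤ r0 ∧ ∃ ε > 0, Metric.ball ω ε ⊆ U ∧
      ∀ ω' ∈ Metric.ball ω ε, ∃! t, t ∈ Set.Icc (c - r) (c + r) ∧ f (ω', t) = 0 := by
  have hUo : IsOpen (U ×ˢ (univ : Set ℝ)) := hU.prod isOpen_univ
  have hV : IsOpen ((U ×ˢ (univ : Set ℝ)) ∩ φ ⁻¹' Ioi 0) :=
    hφc.isOpen_inter_preimage hUo isOpen_Ioi
  have hmem : ((ω, c) : E × ℝ) ∈ (U ×ˢ (univ : Set ℝ)) ∩ φ ⁻¹' Ioi 0 :=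
    ⟨⟨hω, mem_univ _⟩, hφ⟩
  obtain ⟨δ, hδ, hball⟩ := Metric.isOpen_iff.1 hV _ hmem
  set r := min (δ / 2) r0 with hrdef
  have hrpos : 0 < r := lt_min (by linarith) hr0
  have hrδ : r < δ := lt_of_le_of_lt (min_le_left _ _) (by linarith)
  have hgood : ∀ ω' ∈ ball ω (δ / 2), ∀ t ∈ Icc (c - r) (c + r),
      ω' ∈ U ∧ 0 < φ (ω', t) := by
    intro ω' hω' t ht
    have hmem2 : ((ω', t) : E × ℝ) ∈ ball (ω, c) δ := by
      rw [← ball_prod_same]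
      refine ⟨ball_subset_ball (by linarith) hω', ?_⟩
      rw [mem_ball, Real.dist_eq, abs_sub_lt_iff]
      rcases ht with ⟨h1, h2⟩
      constructor <;> linarith
    have := hball hmem2
    exact ⟨this.1.1, this.2⟩
  have hωb : ω ∈ ball ω (δ / 2) := mem_ball_self (by linarith)
  -- continuity of slices
  have hcont1 : ∀ ω' ∈ U, Continuous (fun s => f (ω', s)) := by
    intro ω' hω'
    exact continuous_iff_continuousAt.2 fun t => (hder ω' hω' t).continuousAt
  -- strict monotonicity at ω
  have hmono : StrictMonoOn (fun s => f (ω, s)) (Icc (c - r) (c + r)) := by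
    refine strictMonoOn_of_deriv_pos (convex_Icc _ _) ((hcont1 ω hω).continuousOn) ?_
    intro t ht
    rw [interior_Icc] at ht
    rw [(hder ω hω t).deriv]
    exact (hgood ω hωb t (Ioo_subset_Icc_self ht)).2
  have hcIcc : c ∈ Icc (c - r) (c + r) := ⟨by linarith, by linarith⟩
  have hneg : f (ω, c - r) < 0 := by
    have := hmono ⟨le_refl _, by linarith⟩ hcIcc (by linarith)
    simpa [hc] using this
  have hpos : 0 < f (ω, c + r) := by
    have := hmono hcIcc ⟨by linarith, le_refl _⟩ (by linarith)
    simpa [hc] using this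
  have hcont2 : ∀ t : ℝ, ContinuousAt (fun ω' => f (ω', t)) ω := by
    intro t
    have h1 : ContinuousAt f (ω, t) := hfc.continuousAt (hUo.mem_nhds ⟨hω, mem_univ _⟩)
    have h2 : ContinuousAt (fun ω' : E => ((ω', t) : E × ℝ)) ω :=
      (continuous_id.prodMk continuous_const).continuousAt
    have h3 := ContinuousAt.comp (f := fun ω' : E => ((ω', t) : E × ℝ)) h1 h2
    exact h3
  have hev : ∀ᶠ ω' in nhds ω, f (ω', c - r) < 0 ∧ 0 < f (ω', c + r) ∧ ω' ∈ ball ω (δ / 2) := by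
    have h1 := (hcont2 (c - r)).eventually_mem (isOpen_Iio.mem_nhds hneg)
    have h2 := (hcont2 (c + r)).eventually_mem (isOpen_Ioi.mem_nhds hpos)
    have h3 : ∀ᶠ ω' in nhds ω, ω' ∈ ball ω (δ / 2) :=
      Metric.ball_mem_nhds ω (by linarith)
    filter_upwards [h1, h2, h3] with ω' hh1 hh2 hh3 using ⟨hh1, hh2, hh3⟩
  obtain ⟨ε, hε, hεP⟩ := Metric.eventually_nhds_iff.1 hev
  refine ⟨r, hrpos, min_le_right _ _, ε, hε, ?_, ?_⟩
  · intro ω' hω'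
    exact (hgood ω' (hεP hω').2.2 c hcIcc).1
  intro ω' hω'
  obtain ⟨hn, hp, hb⟩ := hεP (mem_ball.1 hω')
  have hωU' : ω' ∈ U := (hgood ω' hb c hcIcc).1
  have hcont' := hcont1 ω' hωU'
  -- existence via IVT
  have hivt : (0 : ℝ) ∈ (fun s => f (ω', s)) '' Ioo (c - r) (c + r) :=
    intermediate_value_Ioo (by linarith) hcont'.continuousOn ⟨hn, hp⟩
  obtain ⟨t, htIoo, htz⟩ := hivt
  have huniq : ∀ t1 t2 : ℝ, (t1 ∈ Icc (c - r) (c + r) ∧ f (ω', t1) = 0) →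
      (t2 ∈ Icc (c - r) (c + r) ∧ f (ω', t2) = 0) → t1 = t2 := by
    have key : ∀ t1 t2 : ℝ, t1 < t2 → t1 ∈ Icc (c - r) (c + r) → t2 ∈ Icc (c - r) (c + r) →
        f (ω', t1) = 0 → f (ω', t2) = 0 → False := by
      intro t1 t2 hlt h1 h2 hz1 hz2
      obtain ⟨ξ, hξ, hξ0⟩ := exists_hasDerivAt_eq_zero hlt hcont'.continuousOn
        (by rw [hz1, hz2]) (fun x _ => hder ω' hωU' x)
      have : 0 < φ (ω', ξ) := (hgood ω' hb ξ
        ⟨le_trans h1.1 (le_of_lt hξ.1), le_trans (le_of_lt hξ.2) h2.2⟩).2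
      exact absurd hξ0 (ne_of_gt this)
    intro t1 t2 ⟨h1, hz1⟩ ⟨h2, hz2⟩
    rcases lt_trichotomy t1 t2 with h | h | h
    · exact absurd (key t1 t2 h h1 h2 hz1 hz2) not_false
    · exact h
    · exact absurd (key t2 t1 h h2 h1 hz2 hz1) not_false
  exact ⟨t, ⟨Ioo_subset_Icc_self htIoo, htz⟩, fun t' ht' => huniq t' t ht' ⟨Ioo_subset_Icc_self htIoo, htz⟩⟩


lemma keyNe (U : Set E) (hU : IsOpen U) (f φ : E × ℝ → ℝ)
    (hfc : ContinuousOn f (U ×ˢ (Set.univ : Set ℝ)))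
    (hφc : ContinuousOn φ (U ×ˢ (Set.univ : Set ℝ)))
    (hder : ∀ ω' ∈ U, ∀ t : ℝ, HasDerivAt (fun s => f (ω', s)) (φ (ω', t)) t)
    {ω : E} (hω : ω ∈ U) {c : ℝ} (hc : f (ω, c) = 0) (hφ : φ (ω, c) ≠ 0)
    {r0 : ℝ} (hr0 : 0 < r0) :
    ∃ r, 0 < r ∧ r ≤ r0 ∧ ∃ ε > 0, Metric.ball ω ε ⊆ U ∧
      ∀ ω' ∈ Metric.ball ω ε, ∃! t, t ∈ Set.Icc (c - r) (c + r) ∧ f (ω', t) = 0 := by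
  rcases hφ.lt_or_gt with h | h
  · have hc' : (fun p => -f p) (ω, c) = 0 := by simp [hc]
    have hφ' : 0 < (fun p => -φ p) (ω, c) := by simpa using h
    have h1 := keyPos U hU (fun p => -f p) (fun p => -φ p) hfc.neg hφc.neg
      (fun ω' hω' t => (hder ω' hω' t).neg) hω hc' hφ' hr0
    obtain ⟨r, hr1, hr2, ε, hε, hsub, hP⟩ := h1
    refine ⟨r, hr1, hr2, ε, hε, hsub, fun ω' hω' => ?_⟩
    obtain ⟨t, ⟨ht1, ht2⟩, ht3⟩ := hP ω' hω'
    exact ⟨t, ⟨ht1, by simpa using ht2⟩,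
      fun t' ht' => ht3 t' ⟨ht'.1, by simp [ht'.2]⟩⟩
  · exact keyPos U hU f φ hfc hφc hder hω hc h hr0

lemma zeros_finite (U : Set E) (f φ : E × ℝ → ℝ)
    (hder : ∀ ω' ∈ U, ∀ t : ℝ, HasDerivAt (fun s => f (ω', s)) (φ (ω', t)) t)
    (hnz : ∀ ω' ∈ U, ∀ t : ℝ, f (ω', t) = 0 → φ (ω', t) ≠ 0)
    {ω : E} (hω : ω ∈ U) (a b : ℝ) :
    {t ∈ Set.Icc a b | f (ω, t) = 0}.Finite := by
  set S := {t ∈ Set.Icc a b | f (ω, t) = 0} with hS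
  have hcont : Continuous fun s => f (ω, s) :=
    continuous_iff_continuousAt.2 fun t => (hder ω hω t).continuousAt
  have hclosed : IsClosed S := by
    have hSeq : S = Icc a b ∩ (fun s => f (ω, s)) ⁻¹' {0} := by
      ext t; simp [hS]
    rw [hSeq]
    exact isClosed_Icc.inter (isClosed_singleton.preimage hcont)
  have hcompact : IsCompact S :=
    isCompact_Icc.of_isClosed_subset hclosed fun t ht => ht.1
  have hdisc : DiscreteTopology S := by
    rw [discreteTopology_subtype_iff]
    intro t ht
    rw [inf_principal_eq_bot]
    have h1 : ∀ᶠ z in nhdsWithin t {t}ᶜ, f (ω, z) ≠ f (ω, t) :=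
      (hder ω hω t).eventually_ne (hnz ω hω t ht.2)
    filter_upwards [h1] with z hz
    intro hzS
    exact hz (by rw [hzS.2, ht.2])
  exact hcompact.finite (isDiscrete_iff_discreteTopology.mpr hdisc)

lemma count_const (U : Set E) (hU : IsOpen U) (f φ : E × ℝ → ℝ)
    (hfc : ContinuousOn f (U ×ˢ (Set.univ : Set ℝ)))
    (hφc : ContinuousOn φ (U ×ˢ (Set.univ : Set ℝ)))
    (hder : ∀ ω' ∈ U, ∀ t : ℝ, HasDerivAt (fun s => f (ω', s)) (φ (ω', t)) t)
    (hnz : ∀ ω' ∈ U, ∀ t : ℝ, f (ω', t) = 0 → φ (ω', t) ≠ 0)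
    {ω : E} (hω : ω ∈ U) {a b : ℝ} (hab : a < b)
    (hfa : f (ω, a) ≠ 0) (hfb : f (ω, b) ≠ 0) :
    ∃ ε > 0, Metric.ball ω ε ⊆ U ∧ ∀ ω' ∈ Metric.ball ω ε,
      {t ∈ Set.Icc a b | f (ω', t) = 0}.ncard = {t ∈ Set.Icc a b | f (ω, t) = 0}.ncard ∧
      {t ∈ Set.Icc a b | f (ω', t) = 0} ⊆ Set.Ioo a b := by
  classical
  have hUo : IsOpen (U ×ˢ (univ : Set ℝ)) := hU.prod isOpen_univ
  set Z := {t ∈ Set.Icc a b | f (ω, t) = 0} with hZdef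
  have hZfin : Z.Finite := zeros_finite U f φ hder hnz hω a b
  have hZIoo : Z ⊆ Ioo a b := by
    rintro t ⟨⟨h1, h2⟩, hz⟩
    rcases h1.lt_or_eq with h | h
    · rcases h2.lt_or_eq with h' | h'
      · exact ⟨h, h'⟩
      · exfalso; apply hfb; rw [← h']; exact hz
    · exfalso; apply hfa; rw [h]; exact hz
  -- separation radii
  have hd : ∀ z ∈ Z, ∃ d, 0 < d ∧ (∀ z' ∈ Z, z' ≠ z → 3 * d ≤ |z' - z|) ∧
      3 * d ≤ z - a ∧ 3 * d ≤ b - z := by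
    intro z hz
    set D : Set ℝ := (Z \ {z}) ∪ {a, b} with hDdef
    have hDfin : D.Finite := (hZfin.diff).union (by simp)
    have hDne : D.Nonempty := ⟨a, Or.inr (by simp)⟩
    have hzD : z ∉ D := by
      rintro (⟨_, hz2⟩ | h)
      · exact hz2 rfl
      · have hzo := hZIoo hz
        rcases h with h | h
        · rw [h] at hzo; exact lt_irrefl a hzo.1
        · rw [mem_singleton_iff] at h; rw [h] at hzo; exact lt_irrefl b hzo.2
    have hpos : 0 < Metric.infDist z D :=
      (hDfin.isClosed.notMem_iff_infDist_pos hDne).1 hzD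
    refine ⟨Metric.infDist z D / 3, by linarith, ?_, ?_, ?_⟩
    · intro z' hz' hne
      have h1 : z' ∈ D := Or.inl ⟨hz', hne⟩
      have h2 := Metric.infDist_le_dist_of_mem (x := z) h1
      rw [Real.dist_eq, abs_sub_comm] at h2
      linarith
    · have h1 : a ∈ D := Or.inr (by simp)
      have h2 := Metric.infDist_le_dist_of_mem (x := z) h1
      rw [Real.dist_eq, abs_of_pos (by linarith [(hZIoo hz).1])] at h2
      linarith
    · have h1 : b ∈ D := Or.inr (by simp)
      have h2 := Metric.infDist_le_dist_of_mem (x := z) h1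
      rw [Real.dist_eq, abs_of_neg (by linarith [(hZIoo hz).2])] at h2
      linarith
  choose! d hd0 hdsep hdla hdlb using hd
  have hkey2 : ∀ z ∈ Z, ∃ r, 0 < r ∧ r ≤ d z ∧ ∃ ε, 0 < ε ∧ Metric.ball ω ε ⊆ U ∧
      ∀ ω' ∈ Metric.ball ω ε, ∃! t, t ∈ Set.Icc (z - r) (z + r) ∧ f (ω', t) = 0 := by
    intro z hz
    obtain ⟨r, h1, h2, ε, hε, hsub, hP⟩ :=
      keyNe U hU f φ hfc hφc hder hω hz.2 (hnz ω hω z hz.2) (hd0 z hz)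
    exact ⟨r, h1, h2, ε, hε, hsub, hP⟩
  choose! r hr0 hrd ε hε0 hεU huni using hkey2
  -- compact exclusion set
  set K := Icc a b \ ⋃ z ∈ Z, Ioo (z - r z) (z + r z) with hKdef
  have hKcomp : IsCompact K := isCompact_Icc.diff (isOpen_biUnion fun z _ => isOpen_Ioo)
  have hKne : ∀ t ∈ K, f (ω, t) ≠ 0 := by
    rintro t ⟨ht1, ht2⟩ hzero
    have htZ : t ∈ Z := ⟨ht1, hzero⟩
    refine ht2 (mem_biUnion htZ ?_)
    have := hr0 t htZ
    exact ⟨by linarith, by linarith⟩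
  have hW : IsOpen ((U ×ˢ (univ : Set ℝ)) ∩ f ⁻¹' ({0}ᶜ)) :=
    hfc.isOpen_inter_preimage hUo isOpen_compl_singleton
  have hsubW : (({ω} : Set E) ×ˢ K) ⊆ (U ×ˢ (univ : Set ℝ)) ∩ f ⁻¹' ({0}ᶜ) := by
    rintro ⟨ω1, t⟩ ⟨hω1, ht⟩
    rw [mem_singleton_iff] at hω1
    subst hω1
    exact ⟨⟨hω, trivial⟩, hKne t ht⟩
  obtain ⟨u, v, hu, hv, hωu, hKv, huv⟩ :=
    generalized_tube_lemma isCompact_singleton hKcomp hW hsubW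
  obtain ⟨εK, hεK, hballK⟩ := Metric.isOpen_iff.1 hu ω (hωu rfl)
  have hKsafe : ∀ ω' ∈ ball ω εK, ∀ t ∈ K, f (ω', t) ≠ 0 := by
    intro ω' hω' t ht
    exact (huv ⟨hballK hω', hKv ht⟩).2
  -- endpoints are in K
  have haK : a ∈ K := by
    refine ⟨⟨le_refl a, hab.le⟩, ?_⟩
    intro hmem
    rw [mem_iUnion₂] at hmem
    obtain ⟨z, hz, hl, _⟩ := hmem
    have h1 := hdla z hz; have h2 := hrd z hz; have h3 := hd0 z hz
    linarith
  -- the final radius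
  set Zf := hZfin.toFinset with hZf
  set ε' : ℝ := if h : Zf.Nonempty then min εK (Zf.inf' h ε) else εK with hε'
  have hε'pos : 0 < ε' := by
    rw [hε']; split_ifs with h
    · refine lt_min hεK ?_
      rw [Finset.lt_inf'_iff]
      intro z hzf; exact hε0 z (hZfin.mem_toFinset.1 hzf)
    · exact hεK
  have hε'K : ε' ≤ εK := by
    rw [hε']; split_ifs; exacts [min_le_left _ _, le_refl _]
  have hε'z : ∀ z ∈ Z, ε' ≤ ε z := by
    intro z hz
    have hzf : z ∈ Zf := hZfin.mem_toFinset.2 hz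
    rw [hε', dif_pos ⟨z, hzf⟩]
    exact le_trans (min_le_right _ _) (Finset.inf'_le _ hzf)
  have hballU : ∀ ω' ∈ ball ω ε', ω' ∈ U := by
    intro ω' hω'
    have hm : ((ω', a) : E × ℝ) ∈ u ×ˢ v := ⟨hballK (ball_subset_ball hε'K hω'), hKv haK⟩
    exact (huv hm).1.1
  refine ⟨ε', hε'pos, fun ω' hω' => hballU ω' hω', ?_⟩
  intro ω' hω'
  have hω'K : ω' ∈ ball ω εK := ball_subset_ball hε'K hω'
  have hcover : ∀ t, t ∈ Icc a b → f (ω', t) = 0 → ∃ z ∈ Z, t ∈ Ioo (z - r z) (z + r z) := by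
    intro t ht hz
    by_contra hcon
    push_neg at hcon
    have htK : t ∈ K := by
      refine ⟨ht, ?_⟩
      intro hmem
      rw [mem_iUnion₂] at hmem
      obtain ⟨z, hz', hm⟩ := hmem
      exact hcon z hz' hm
    exact hKsafe ω' hω'K t htK hz
  have hgex : ∀ z ∈ Z, ∃ t, (t ∈ Set.Icc (z - r z) (z + r z) ∧ f (ω', t) = 0) ∧
      ∀ t', (t' ∈ Set.Icc (z - r z) (z + r z) ∧ f (ω', t') = 0) → t' = t := by
    intro z hz
    obtain ⟨t, ht, hu2⟩ := huni z hz ω' (ball_subset_ball (hε'z z hz) hω')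
    exact ⟨t, ht, hu2⟩
  choose! g hg1 hg2 using hgex
  have hgIoo : ∀ z ∈ Z, g z ∈ Ioo a b := by
    intro z hz
    have h1 := (hg1 z hz).1
    have h2 := hdla z hz
    have h3 := hdlb z hz
    have h4 := hrd z hz
    have h5 := hd0 z hz
    exact ⟨by linarith [h1.1], by linarith [h1.2]⟩
  have himg : {t ∈ Set.Icc a b | f (ω', t) = 0} = g '' Z := by
    apply Subset.antisymm
    · rintro t ⟨ht, hz0⟩
      obtain ⟨z, hz, htIoo⟩ := hcover t ht hz0
      exact ⟨z, hz, (hg2 z hz t ⟨Ioo_subset_Icc_self htIoo, hz0⟩).symm⟩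
    · rintro t ⟨z, hz, rfl⟩
      exact ⟨Ioo_subset_Icc_self (hgIoo z hz), (hg1 z hz).2⟩
  have hinj : Set.InjOn g Z := by
    intro z1 h1 z2 h2 heq
    by_contra hne
    have ha1 := (hg1 z1 h1).1
    have ha2 := (hg1 z2 h2).1
    have hs1 := hdsep z1 h1 z2 h2 (Ne.symm hne)
    have hs2 := hdsep z2 h2 z1 h1 hne
    have hr1 := hrd z1 h1
    have hr2 := hrd z2 h2
    have habs : 0 < |z1 - z2| := abs_pos.2 (sub_ne_zero.2 hne)
    have e1 : |z1 - g z1| ≤ r z1 := abs_le.2 ⟨by linarith [ha1.2], by linarith [ha1.1]⟩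
    have e2 : |g z2 - z2| ≤ r z2 := abs_le.2 ⟨by linarith [ha2.1], by linarith [ha2.2]⟩
    have e3 : |z1 - z2| ≤ r z1 + r z2 := by
      calc |z1 - z2| = |(z1 - g z1) + (g z2 - z2)| := by rw [heq]; ring_nf
        _ ≤ |z1 - g z1| + |g z2 - z2| := abs_add_le _ _
        _ ≤ r z1 + r z2 := add_le_add e1 e2
    have hcomm : |z1 - z2| = |z2 - z1| := abs_sub_comm _ _
    linarith
  constructor
  · rw [himg, Set.ncard_image_of_injOn hinj]
  · rw [himg]
    rintro t ⟨z, hz, rfl⟩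
    exact hgIoo z hz

lemma shift_count (ℓ : ℝ) (g : ℝ → ℝ) (hg : ∀ t, g (t + ℓ) = g t)
    {a : ℝ} (ha : a ∈ Set.Ico 0 ℓ)
    (hfin : ∀ u v : ℝ, {t ∈ Set.Icc u v | g t = 0}.Finite) :
    {t ∈ Set.Ico a (a + ℓ) | g t = 0}.ncard = {t ∈ Set.Ico 0 ℓ | g t = 0}.ncard := by
  obtain ⟨ha0, haℓ⟩ := ha
  set A := {t ∈ Set.Ico a ℓ | g t = 0} with hA
  set B := {t ∈ Set.Ico 0 a | g t = 0} with hB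
  set C := {t ∈ Set.Ico ℓ (a + ℓ) | g t = 0} with hC
  have hAfin : A.Finite := (hfin a ℓ).subset fun t ht => ⟨⟨ht.1.1, ht.1.2.le⟩, ht.2⟩
  have hBfin : B.Finite := (hfin 0 a).subset fun t ht => ⟨⟨ht.1.1, ht.1.2.le⟩, ht.2⟩
  have hCfin : C.Finite := (hfin ℓ (a + ℓ)).subset fun t ht => ⟨⟨ht.1.1, ht.1.2.le⟩, ht.2⟩
  have h1 : {t ∈ Set.Ico a (a + ℓ) | g t = 0} = A ∪ C := by
    ext t
    constructor
    · rintro ⟨⟨hx1, hx2⟩, hz⟩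
      rcases lt_or_ge t ℓ with h | h
      · exact Or.inl ⟨⟨hx1, h⟩, hz⟩
      · exact Or.inr ⟨⟨h, hx2⟩, hz⟩
    · rintro (⟨⟨hx1, hx2⟩, hz⟩ | ⟨⟨hx1, hx2⟩, hz⟩)
      · exact ⟨⟨hx1, by linarith⟩, hz⟩
      · exact ⟨⟨by linarith, hx2⟩, hz⟩
  have h2 : {t ∈ Set.Ico 0 ℓ | g t = 0} = B ∪ A := by
    ext t
    constructor
    · rintro ⟨⟨hx1, hx2⟩, hz⟩
      rcases lt_or_ge t a with h | h
      · exact Or.inl ⟨⟨hx1, h⟩, hz⟩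
      · exact Or.inr ⟨⟨h, hx2⟩, hz⟩
    · rintro (⟨⟨hx1, hx2⟩, hz⟩ | ⟨⟨hx1, hx2⟩, hz⟩)
      · exact ⟨⟨hx1, by linarith⟩, hz⟩
      · exact ⟨⟨by linarith, hx2⟩, hz⟩
  have h3 : C = (fun t => t + ℓ) '' B := by
    ext t
    constructor
    · rintro ⟨⟨hx1, hx2⟩, hz⟩
      refine ⟨t - ℓ, ⟨⟨by linarith, by linarith⟩, ?_⟩, by ring⟩
      have e : t - ℓ + ℓ = t := by ring
      have h := hg (t - ℓ)
      rw [e] at h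
      rw [← h]; exact hz
    · rintro ⟨s, ⟨⟨hx1, hx2⟩, hz⟩, hst⟩
      rw [show (fun t => t + ℓ) s = s + ℓ from rfl] at hst
      subst hst
      exact ⟨⟨by linarith, by linarith⟩, by rw [hg s]; exact hz⟩
  have hdisjAC : Disjoint A C := by
    rw [Set.disjoint_left]
    rintro t ⟨⟨_, h2'⟩, _⟩ ⟨⟨h3', _⟩, _⟩
    linarith
  have hdisjBA : Disjoint B A := by
    rw [Set.disjoint_left]
    rintro t ⟨⟨_, h2'⟩, _⟩ ⟨⟨h3', _⟩, _⟩
    linarith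
  rw [h1, h2, Set.ncard_union_eq hdisjAC hAfin hCfin,
    Set.ncard_union_eq hdisjBA hBfin hAfin, h3,
    Set.ncard_image_of_injOn ((add_left_injective ℓ).injOn)]
  exact Nat.add_comm _ _


end Aux

open MeasureTheory

/-- Local constancy of the zero count for families without double zeros. -/
theorem zero_count_locally_constant (ℓ : ℝ) (hℓ : 0 < ℓ) (m : ℕ)
    (U : Set (EuclideanSpace ℝ (Fin m))) (hU : IsOpen U)
    (f : EuclideanSpace ℝ (Fin m) × ℝ → ℝ)
    (hf : ContDiffOn ℝ 1 f (U ×ˢ (Set.univ : Set ℝ)))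
    (hper : ∀ ω ∈ U, ∀ θ : ℝ, f (ω, θ + ℓ) = f (ω, θ))
    (hnd : ∀ ω ∈ U, ∀ θ : ℝ, ¬ (f (ω, θ) = 0 ∧ deriv (fun t => f (ω, t)) θ = 0)) :
    (∀ ω ∈ U, {θ ∈ Set.Ico (0 : ℝ) ℓ | f (ω, θ) = 0}.Finite) ∧
    (∀ ω ∈ U, ∀ᶠ ω' in nhdsWithin ω U,
      {θ ∈ Set.Ico (0 : ℝ) ℓ | f (ω', θ) = 0}.ncard
        = {θ ∈ Set.Ico (0 : ℝ) ℓ | f (ω, θ) = 0}.ncard) := by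
  classical
  have hUo : IsOpen (U ×ˢ (Set.univ : Set ℝ)) := hU.prod isOpen_univ
  set φ : EuclideanSpace ℝ (Fin m) × ℝ → ℝ := fun p => fderiv ℝ f p (0, 1) with hφdef
  have hfc : ContinuousOn f (U ×ˢ (Set.univ : Set ℝ)) := hf.continuousOn
  have hφc : ContinuousOn φ (U ×ˢ (Set.univ : Set ℝ)) := by
    have h1 := hf.continuousOn_fderiv_of_isOpen hUo le_rfl
    exact h1.clm_apply continuousOn_const
  have hder : ∀ ω' ∈ U, ∀ t : ℝ, HasDerivAt (fun s => f (ω', s)) (φ (ω', t)) t := by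
    intro ω' hω' t
    have hdAt : DifferentiableAt ℝ f (ω', t) :=
      (hf.differentiableOn one_ne_zero).differentiableAt (hUo.mem_nhds ⟨hω', trivial⟩)
    have h2 : HasDerivAt (fun s : ℝ => ((ω', s) : EuclideanSpace ℝ (Fin m) × ℝ))
        ((0 : EuclideanSpace ℝ (Fin m)), (1 : ℝ)) t :=
      (hasDerivAt_const t ω').prodMk (hasDerivAt_id t)
    have h3 := hdAt.hasFDerivAt.comp_hasDerivAt t h2
    exact h3
  have hderiv_eq : ∀ ω' ∈ U, ∀ t : ℝ, deriv (fun s => f (ω', s)) t = φ (ω', t) :=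
    fun ω' h t => (hder ω' h t).deriv
  have hnz : ∀ ω' ∈ U, ∀ t : ℝ, f (ω', t) = 0 → φ (ω', t) ≠ 0 := by
    intro ω' h t hz hφ0
    exact hnd ω' h t ⟨hz, by rw [hderiv_eq ω' h t]; exact hφ0⟩
  have hfin : ∀ ω' ∈ U, ∀ u v : ℝ, {t ∈ Set.Icc u v | f (ω', t) = 0}.Finite :=
    fun ω' h u v => zeros_finite U f φ hder hnz h u v
  constructor
  · intro ω hω
    exact (hfin ω hω 0 ℓ).subset fun t ht => ⟨⟨ht.1.1, ht.1.2.le⟩, ht.2⟩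
  · intro ω hω
    obtain ⟨a, haI, hfa⟩ : ∃ a ∈ Set.Ico (0 : ℝ) ℓ, f (ω, a) ≠ 0 := by
      by_contra hcon
      push_neg at hcon
      have hsub : Set.Ico (0 : ℝ) ℓ ⊆ {t ∈ Set.Icc (0 : ℝ) ℓ | f (ω, t) = 0} :=
        fun t ht => ⟨⟨ht.1, ht.2.le⟩, hcon t ht⟩
      exact (Set.Ico_infinite hℓ) ((hfin ω hω 0 ℓ).subset hsub)
    have hfb : f (ω, a + ℓ) ≠ 0 := by rw [hper ω hω a]; exact hfa
    have hab : a < a + ℓ := by linarith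
    obtain ⟨ε, hεpos, hεU, hP⟩ := count_const U hU f φ hfc hφc hder hnz hω hab hfa hfb
    have hball : Metric.ball ω ε ∈ nhdsWithin ω U :=
      mem_nhdsWithin_of_mem_nhds (Metric.ball_mem_nhds ω hεpos)
    have key : ∀ ω'' ∈ Metric.ball ω ε, ω'' ∈ U →
        {θ ∈ Set.Ico (0 : ℝ) ℓ | f (ω'', θ) = 0}.ncard
          = {t ∈ Set.Icc a (a + ℓ) | f (ω, t) = 0}.ncard := by
      intro ω'' hb hU''
      obtain ⟨hcnt, hIoo⟩ := hP ω'' hb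
      have e1 : {t ∈ Set.Ico a (a + ℓ) | f (ω'', t) = 0}
          = {t ∈ Set.Icc a (a + ℓ) | f (ω'', t) = 0} := by
        apply Set.Subset.antisymm
        · rintro t ⟨ht, hz⟩; exact ⟨⟨ht.1, ht.2.le⟩, hz⟩
        · intro t ht
          have h2 := hIoo ht
          exact ⟨⟨h2.1.le, h2.2⟩, ht.2⟩
      have e2 := shift_count ℓ (fun t => f (ω'', t)) (fun t => hper ω'' hU'' t) haI
        (fun u v => hfin ω'' hU'' u v)
      rw [← e2, e1, hcnt]
    filter_upwards [hball, self_mem_nhdsWithin] with ω' hω'b hω'U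
    rw [key ω' hω'b hω'U, key ω (Metric.mem_ball_self hεpos) hω]
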